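/- Let G be a graph and F a completion of G. Let P be an induced path in G with vertices x₁,…,x_s in order, and let R be an induced path in H = G+F from x₁ to x_s with all vertices in V(P). Then s − |V(R)| ≤ |F|; i.e., the number of vertices of P not used by R is at most the number of fill-in edges. -/

import Mathlib

/-- A combinatorial interval model of a graph `G`: an injection from the `2n` events
`beg v` (encoded `Sum.inl v`) and `end v` (encoded `Sum.inr v`) onto the positions
`{1, …, 2n}` such that each interval starts before it ends, and two distinct
vertices are non-adjacent iff their intervals are disjoint. -/
structure IntervalModel {V : Type*} [Fintype V] (G : SimpleGraph V) where
  σ : V ⊕ V → ℕ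
  inj : Function.Injective σ
  lb : ∀ e, 1 ≤ σ e
  ub : ∀ e, σ e ≤ 2 * Fintype.card V
  surj : ∀ i : ℕ, 1 ≤ i → i ≤ 2 * Fintype.card V → ∃ e, σ e = i
  begEnd : ∀ v, σ (Sum.inl v) < σ (Sum.inr v)
  adjIff : ∀ u v, u ≠ v →
    (¬ G.Adj u v ↔ σ (Sum.inr v) < σ (Sum.inl u) ∨ σ (Sum.inr u) < σ (Sum.inl v))

/-- The section of an interval model at position `p`:
vertices whose interval is "pinned" just after position `p`. -/
def intervalSection {V : Type*} [Fintype V] {G : SimpleGraph V}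
    (M : IntervalModel G) (p : ℕ) : Set V :=
  {v | M.σ (Sum.inl v) ≤ p ∧ p < M.σ (Sum.inr v)}

/-- The events of a set of vertices. -/
def eventsOf {V : Type*} (X : Set V) : Set (V ⊕ V) :=
  (Sum.inl : V → V ⊕ V) '' X ∪ (Sum.inr : V → V ⊕ V) '' X

/-- The vertex set (in the ambient graph) of a connected component of an induced subgraph. -/
def compSupp {V : Type*} {s : Set V} {H : SimpleGraph s}
    (c : H.ConnectedComponent) : Set V :=
  Subtype.val '' c.supp

/-- Let `F` be a completion of `G`, let `P = x₀, …, x_{s-1}` be an induced path in `G`,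
and let `R = y₀, …, y_{t-1}` be an induced path in `G + F` from `x₀` to `x_{s-1}` with
all vertices in `V(P)`. Then `s - t ≤ |F|`: the number of vertices of `P` not used by
`R` is at most the number of fill-in edges. -/
def fills (b e : ℕ → ℕ) (s : ℕ) : Finset (ℕ × ℕ) :=
  (Finset.range s ×ˢ Finset.range s).filter
    (fun p => p.1 + 2 ≤ p.2 ∧ b p.1 ≤ e p.2 ∧ b p.2 ≤ e p.1)

lemma mem_fills {b e : ℕ → ℕ} {s : ℕ} {p : ℕ × ℕ} :
    p ∈ fills b e s ↔ (p.1 + 2 ≤ p.2 ∧ p.2 < s) ∧ (b p.1 ≤ e p.2 ∧ b p.2 ≤ e p.1) := by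
  simp only [fills, Finset.mem_filter, Finset.mem_product, Finset.mem_range]
  constructor
  · rintro ⟨⟨h1, h2⟩, h3, h4, h5⟩
    exact ⟨⟨h3, h2⟩, h4, h5⟩
  · rintro ⟨⟨h3, h2⟩, h4, h5⟩
    exact ⟨⟨by omega, h2⟩, h3, h4, h5⟩

lemma fills_step1 {b e b' e' : ℕ → ℕ} {s s' : ℕ} (f : ℕ × ℕ → ℕ × ℕ) (q : ℕ × ℕ)
    (hmaps : ∀ p ∈ fills b' e' s', f p ∈ fills b e s)
    (hinj : Set.InjOn f (fills b' e' s'))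
    (hq : q ∈ fills b e s)
    (hqn : ∀ p ∈ fills b' e' s', f p ≠ q) :
    (fills b' e' s').card + 1 ≤ (fills b e s).card := by
  have h1 : insert q ((fills b' e' s').image f) ⊆ fills b e s := by
    intro p hp
    rcases Finset.mem_insert.mp hp with rfl | hp
    · exact hq
    · obtain ⟨a, ha, rfl⟩ := Finset.mem_image.mp hp
      exact hmaps a ha
  have h2 : q ∉ (fills b' e' s').image f := by
    intro hmem
    obtain ⟨a, ha, hfa⟩ := Finset.mem_image.mp hmem
    exact hqn a ha hfa
  calc (fills b' e' s').card + 1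
      = ((fills b' e' s').image f).card + 1 := by rw [Finset.card_image_of_injOn hinj]
    _ = (insert q ((fills b' e' s').image f)).card := (Finset.card_insert_of_notMem h2).symm
    _ ≤ _ := Finset.card_le_card h1

lemma abstract_fill : ∀ s : ℕ, ∀ (b e ρ : ℕ → ℕ) (t : ℕ),
    0 < s → 0 < t →
    (∀ i, i + 1 < s → b i ≤ e (i+1) ∧ b (i+1) ≤ e i) →
    Set.InjOn ρ (Set.Iio t) →
    ρ 0 = 0 → ρ (t-1) = s-1 →
    (∀ i, i < t → ρ i < s) →
    (∀ i, i + 1 < t → b (ρ i) ≤ e (ρ (i+1)) ∧ b (ρ (i+1)) ≤ e (ρ i)) →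
    (∀ i j, j < t → i + 1 < j → ¬(b (ρ i) ≤ e (ρ j) ∧ b (ρ j) ≤ e (ρ i))) →
    s - t ≤ (fills b e s).card := by
  intro s
  induction s using Nat.strong_induction_on with
  | _ s IH =>
  intro b e ρ t hs ht hpath hinj hρ0 hρl hρlt hradj hrind
  -- injectivity of ρ in convenient form
  have hinj' : ∀ i j, i < t → j < t → ρ i = ρ j → i = j := by
    intro i j hi hj hij
    exact hinj (Set.mem_Iio.mpr hi) (Set.mem_Iio.mpr hj) hij
  rcases Nat.lt_or_ge s 2 with hs1 | hs2
  · have h0 : s - t = 0 := by omega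
    simp [h0]
  have ht2 : 2 ≤ t := by
    by_contra h
    have h1 : t = 1 := by omega
    have h2 : ρ 0 = s - 1 := by simpa [h1] using hρl
    omega
  by_cases hA : ρ 1 = 1
  · -- shift left: drop vertex 0
    have hρpos : ∀ i, 0 < i → i < t → 1 ≤ ρ i := by
      intro i hi hit
      rcases Nat.eq_zero_or_pos (ρ i) with h | h
      · exact absurd (hinj' i 0 hit ht (by rw [h, hρ0])) (by omega)
      · exact h
    have key := IH (s-1) (by omega) (fun i => b (i+1)) (fun i => e (i+1))
        (fun i => ρ (i+1) - 1) (t-1) (by omega) (by omega)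
        (fun i hi => hpath (i+1) (by omega))
        (by
          intro a ha c hc hac
          simp only [Set.mem_Iio] at ha hc
          have hac' : ρ (a+1) - 1 = ρ (c+1) - 1 := hac
          have h1 : 1 ≤ ρ (a+1) := hρpos (a+1) (by omega) (by omega)
          have h2 : 1 ≤ ρ (c+1) := hρpos (c+1) (by omega) (by omega)
          have : ρ (a+1) = ρ (c+1) := by omega
          have := hinj' (a+1) (c+1) (by omega) (by omega) this
          omega)
        (by simp [hA])
        (by
          show ρ ((t-1) - 1 + 1) - 1 = s - 1 - 1
          have h1 : (t-1) - 1 + 1 = t - 1 := by omega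
          rw [h1, hρl])
        (by
          intro i hi
          show ρ (i+1) - 1 < s - 1
          have := hρlt (i+1) (by omega)
          have := hρpos (i+1) (by omega) (by omega)
          omega)
        (by
          intro i hi
          have h1 : 1 ≤ ρ (i+1) := hρpos (i+1) (by omega) (by omega)
          have h2 : 1 ≤ ρ (i+2) := hρpos (i+2) (by omega) (by omega)
          have := hradj (i+1) (by omega)
          simp only [Nat.sub_add_cancel h1, Nat.sub_add_cancel h2]
          convert this using 3)
        (by
          intro i j hj hij
          have h1 : 1 ≤ ρ (i+1) := hρpos (i+1) (by omega) (by omega)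
          have h2 : 1 ≤ ρ (j+1) := hρpos (j+1) (by omega) (by omega)
          have := hrind (i+1) (j+1) (by omega) (by omega)
          simp only [Nat.sub_add_cancel h1, Nat.sub_add_cancel h2]
          exact this)
    have hmono : (fills (fun i => b (i+1)) (fun i => e (i+1)) (s-1)).card ≤ (fills b e s).card := by
      apply Finset.card_le_card_of_injOn (fun p => (p.1 + 1, p.2 + 1))
      · intro p hp
        simp only [Finset.mem_coe, mem_fills] at hp ⊢
        obtain ⟨⟨hg, h2⟩, h3, h4⟩ := hp
        exact ⟨⟨by omega, by omega⟩, h3, h4⟩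
      · intro p _ q _ hpq
        have h1 : p.1 + 1 = q.1 + 1 := congrArg Prod.fst hpq
        have h2 : p.2 + 1 = q.2 + 1 := congrArg Prod.snd hpq
        exact Prod.ext (by omega) (by omega)
    omega
  by_cases hB : ρ (t-2) = s-2
  · -- drop right: drop vertex s-1
    have key := IH (s-1) (by omega) b e ρ (t-1) (by omega) (by omega)
        (fun i hi => hpath i (by omega))
        (fun a ha c hc hac => hinj' a c (by exact lt_trans ha (by omega)) (by
          exact lt_trans hc (by omega)) hac)
        hρ0
        (by rw [show t - 1 - 1 = t - 2 by omega, show s - 1 - 1 = s - 2 by omega]; exact hB)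
        (by
          intro i hi
          have := hρlt i (by omega)
          have : ρ i ≠ s - 1 := by
            intro h
            have := hinj' i (t-1) (by omega) (by omega) (by rw [h, hρl])
            omega
          omega)
        (fun i hi => hradj i (by omega))
        (fun i j hj hij => hrind i j (by omega) hij)
    have hmono : (fills b e (s-1)).card ≤ (fills b e s).card := by
      apply Finset.card_le_card
      intro p hp
      rw [mem_fills] at hp ⊢
      obtain ⟨⟨hg, h2⟩, h34⟩ := hp
      exact ⟨⟨hg, by omega⟩, h34⟩
    omega
  -- main case: take the vertex with minimal right endpoint
  obtain ⟨v, hvmem, hvmin⟩ := Finset.exists_min_image (Finset.range s) e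
    ⟨0, Finset.mem_range.mpr hs⟩
  rw [Finset.mem_range] at hvmem
  have hvmin' : ∀ w, w < s → e v ≤ e w := fun w hw => hvmin w (Finset.mem_range.mpr hw)
  by_cases hvR : ∃ m, m < t ∧ ρ m = v
  · -- v is on R: then v = 0 or v = s-1
    obtain ⟨m, hm, hρm⟩ := hvR
    have hv0s : v = 0 ∨ v = s - 1 := by
      rcases Nat.eq_zero_or_pos m with rfl | hmpos
      · left; rw [← hρm, hρ0]
      rcases Nat.lt_or_ge m (t-1) with hmlt | hmge
      · exfalso
        have hm1 : m - 1 + 1 = m := by omega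
        have had1 := hradj (m-1) (by omega)
        rw [hm1] at had1
        have had2 := hradj m (by omega)
        have h1 : b (ρ (m-1)) ≤ e (ρ (m+1)) := le_trans had1.1 (by
          rw [hρm]; exact hvmin' _ (hρlt (m+1) (by omega)))
        have h2 : b (ρ (m+1)) ≤ e (ρ (m-1)) := le_trans had2.2 (by
          rw [hρm]; exact hvmin' _ (hρlt (m-1) (by omega)))
        exact hrind (m-1) (m+1) (by omega) (by omega) ⟨h1, h2⟩
      · right
        have hm2 : m = t - 1 := by omega
        rw [← hρm, hm2, hρl]
    rcases hv0s with hv0 | hvs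
    · -- v = 0 : left-end jump
      subst hv0
      have hρ1ne0 : ρ 1 ≠ 0 := fun h => by
        have := hinj' 1 0 (by omega) (by omega) (by rw [h, hρ0]); omega
      have hρ1ge2 : 2 ≤ ρ 1 := by
        have : ρ 1 ≠ 1 := hA
        omega
      have hρ1lt : ρ 1 < s := hρlt 1 (by omega)
      have hs3 : 3 ≤ s := by omega
      have hp0 := hpath 0 (by omega)
      have hr0 := hradj 0 (by omega)
      rw [hρ0] at hr0
      have hK1 : b 1 ≤ e (ρ 1) ∧ b (ρ 1) ≤ e 1 :=
        ⟨le_trans hp0.2 (hvmin' _ hρ1lt), le_trans hr0.2 (hvmin' _ (by omega))⟩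
      set K : Finset ℕ :=
        (Finset.range t).filter (fun l => 1 ≤ l ∧ b 1 ≤ e (ρ l) ∧ b (ρ l) ≤ e 1) with hKdef
      have hKne : K.Nonempty :=
        ⟨1, Finset.mem_filter.mpr ⟨Finset.mem_range.mpr (by omega), le_refl 1, hK1.1, hK1.2⟩⟩
      obtain ⟨k, hkmem, hkle⟩ := Finset.exists_max_image K (fun l => l) hKne
      rw [hKdef, Finset.mem_filter, Finset.mem_range] at hkmem
      obtain ⟨hkt, hk1, hkitx1, hkitx2⟩ := hkmem
      have hkmax : ∀ l, k < l → l < t → ¬(b 1 ≤ e (ρ l) ∧ b (ρ l) ≤ e 1) := by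
        intro l hkl hlt hcon
        have hlK : l ∈ K := by
          rw [hKdef, Finset.mem_filter, Finset.mem_range]
          exact ⟨hlt, by omega, hcon.1, hcon.2⟩
        have : l ≤ k := hkle l hlK
        omega
      have h1not : ∀ l, 1 ≤ l → l < t → ρ l ≠ 1 := by
        intro l hl hlt hcon
        rcases Nat.lt_or_ge l 2 with h | h
        · have hl1 : l = 1 := by omega
          rw [hl1] at hcon; exact hA hcon
        · exact hrind 0 l hlt (by omega) (by rw [hρ0, hcon]; exact ⟨hp0.1, hp0.2⟩)
      have hρge2 : ∀ l, 1 ≤ l → l < t → 2 ≤ ρ l := by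
        intro l hl hlt
        have h0 : ρ l ≠ 0 := fun h => by
          have := hinj' l 0 hlt (by omega) (by rw [h, hρ0]); omega
        have h1 : ρ l ≠ 1 := h1not l hl hlt
        omega
      set ρ'' : ℕ → ℕ := fun i => if i = 0 then 0 else ρ (k + i - 1) - 1 with hρ''def
      have hv0' : ρ'' 0 = 0 := by simp [hρ''def]
      have hvpos : ∀ i, i ≠ 0 → ρ'' i = ρ (k + i - 1) - 1 := by
        intro i h; simp [hρ''def, h]
      have hidxlt : ∀ i, 1 ≤ i → i < t - k + 1 → k + i - 1 < t ∧ 1 ≤ k + i - 1 := by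
        intro i h1 h2; omega
      have key := IH (s-1) (by omega) (fun i => b (i+1)) (fun i => e (i+1))
          ρ'' (t - k + 1) (by omega) (by omega)
          (fun i hi => hpath (i+1) (by omega))
          (by
            intro a ha c hc hac
            simp only [Set.mem_Iio] at ha hc
            rcases Nat.eq_zero_or_pos a with rfl | hap
            · rcases Nat.eq_zero_or_pos c with rfl | hcp
              · rfl
              · exfalso
                rw [hv0', hvpos c (by omega)] at hac
                have := hρge2 (k + c - 1) (by omega) (by omega)
                omega
            · rcases Nat.eq_zero_or_pos c with rfl | hcp
              · exfalso
                rw [hv0', hvpos a (by omega)] at hac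
                have := hρge2 (k + a - 1) (by omega) (by omega)
                omega
              · rw [hvpos a (by omega), hvpos c (by omega)] at hac
                have h1 := hρge2 (k + a - 1) (by omega) (by omega)
                have h2 := hρge2 (k + c - 1) (by omega) (by omega)
                have h3 : ρ (k + a - 1) = ρ (k + c - 1) := by omega
                have := hinj' (k + a - 1) (k + c - 1) (by omega) (by omega) h3
                omega)
          hv0'
          (by
            rw [hvpos (t - k + 1 - 1) (by omega)]
            have h1 : k + (t - k + 1 - 1) - 1 = t - 1 := by omega
            rw [h1, hρl])
          (by
            intro i hi
            rcases Nat.eq_zero_or_pos i with rfl | hip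
            · rw [hv0']; omega
            · rw [hvpos i (by omega)]
              have := hρlt (k + i - 1) (by omega)
              omega)
          (by
            intro i hi
            rcases Nat.eq_zero_or_pos i with rfl | hip
            · show b (ρ'' 0 + 1) ≤ e (ρ'' 1 + 1) ∧ b (ρ'' 1 + 1) ≤ e (ρ'' 0 + 1)
              rw [hv0', hvpos 1 (by omega)]
              have h1 : k + 1 - 1 = k := by omega
              have hg : 2 ≤ ρ k := by
                have := hρge2 (k + 1 - 1) (by omega) (by omega)
                rwa [h1] at this
              rw [h1]
              have h2 : ρ k - 1 + 1 = ρ k := by omega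
              rw [h2]
              exact ⟨hkitx1, hkitx2⟩
            · show b (ρ'' i + 1) ≤ e (ρ'' (i+1) + 1) ∧ b (ρ'' (i+1) + 1) ≤ e (ρ'' i + 1)
              rw [hvpos i (by omega), hvpos (i+1) (by omega)]
              have hg1 : 2 ≤ ρ (k + i - 1) := hρge2 (k + i - 1) (by omega) (by omega)
              have hg2 : 2 ≤ ρ (k + (i+1) - 1) := hρge2 (k + (i+1) - 1) (by omega) (by omega)
              have h1 : ρ (k + i - 1) - 1 + 1 = ρ (k + i - 1) := by omega
              have h2 : ρ (k + (i+1) - 1) - 1 + 1 = ρ (k + (i+1) - 1) := by omega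
              rw [h1, h2]
              have := hradj (k + i - 1) (by omega)
              have h3 : k + i - 1 + 1 = k + (i + 1) - 1 := by omega
              rw [h3] at this
              exact this)
          (by
            intro i j hj hij
            show ¬(b (ρ'' i + 1) ≤ e (ρ'' j + 1) ∧ b (ρ'' j + 1) ≤ e (ρ'' i + 1))
            have hjpos : 1 ≤ j := by omega
            have hgj : 2 ≤ ρ (k + j - 1) := hρge2 (k + j - 1) (by omega) (by omega)
            have h2 : ρ (k + j - 1) - 1 + 1 = ρ (k + j - 1) := by omega
            rcases Nat.eq_zero_or_pos i with rfl | hip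
            · rw [hv0', hvpos j (by omega), h2]
              exact hkmax (k + j - 1) (by omega) (by omega)
            · rw [hvpos i (by omega), hvpos j (by omega), h2]
              have hgi : 2 ≤ ρ (k + i - 1) := hρge2 (k + i - 1) (by omega) (by omega)
              have h1 : ρ (k + i - 1) - 1 + 1 = ρ (k + i - 1) := by omega
              rw [h1]
              exact hrind (k + i - 1) (k + j - 1) (by omega) (by omega))
      have hstep : (fills (fun i => b (i+1)) (fun i => e (i+1)) (s-1)).card + 1
          ≤ (fills b e s).card := by
        apply fills_step1 (fun p => (p.1 + 1, p.2 + 1)) (0, ρ 1)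
        · intro p hp
          rw [mem_fills] at hp ⊢
          obtain ⟨⟨hg, h2⟩, h3, h4⟩ := hp
          exact ⟨⟨by omega, by omega⟩, h3, h4⟩
        · intro p _ q _ hpq
          have h1 : p.1 + 1 = q.1 + 1 := congrArg Prod.fst hpq
          have h2 : p.2 + 1 = q.2 + 1 := congrArg Prod.snd hpq
          exact Prod.ext (by omega) (by omega)
        · rw [mem_fills]
          exact ⟨⟨by omega, hρ1lt⟩, hr0.1, hr0.2⟩
        · intro p _ hcon
          have := congrArg Prod.fst hcon
          simp at this
      omega
    · -- v = s - 1 : right-end jump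
      subst hvs
      have hρt2ne : ρ (t-2) ≠ s-1 := fun h => by
        have := hinj' (t-2) (t-1) (by omega) (by omega) (by rw [h, hρl]); omega
      have hρt2lt : ρ (t-2) < s := hρlt (t-2) (by omega)
      have hρt2le : ρ (t-2) + 3 ≤ s := by
        have := hB; omega
      have hs3 : 3 ≤ s := by omega
      have hpl := hpath (s-2) (by omega)
      have h21 : s - 2 + 1 = s - 1 := by omega
      rw [h21] at hpl
      have hrl := hradj (t-2) (by omega)
      have h22 : t - 2 + 1 = t - 1 := by omega
      rw [h22, hρl] at hrl
      have hKt2 : b (s-2) ≤ e (ρ (t-2)) ∧ b (ρ (t-2)) ≤ e (s-2) :=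
        ⟨le_trans hpl.1 (hvmin' _ hρt2lt), le_trans hrl.1 (hvmin' _ (by omega))⟩
      set K : Finset ℕ :=
        (Finset.range (t-1)).filter (fun l => b (s-2) ≤ e (ρ l) ∧ b (ρ l) ≤ e (s-2)) with hKdef
      have hKne : K.Nonempty :=
        ⟨t-2, Finset.mem_filter.mpr ⟨Finset.mem_range.mpr (by omega), hKt2⟩⟩
      obtain ⟨k, hkmem, hkle⟩ := Finset.exists_min_image K (fun l => l) hKne
      rw [hKdef, Finset.mem_filter, Finset.mem_range] at hkmem
      obtain ⟨hkt, hkitx1, hkitx2⟩ := hkmem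
      have hkmin : ∀ l, l < k → ¬(b (s-2) ≤ e (ρ l) ∧ b (ρ l) ≤ e (s-2)) := by
        intro l hlk hcon
        have hlK : l ∈ K := by
          rw [hKdef, Finset.mem_filter, Finset.mem_range]
          exact ⟨by omega, hcon.1, hcon.2⟩
        have : k ≤ l := hkle l hlK
        omega
      have hs2not : ∀ l, l < t - 1 → ρ l ≠ s - 2 := by
        intro l hlt hcon
        rcases Nat.lt_or_ge (l+1) (t-1) with h | h
        · exact hrind l (t-1) (by omega) (by omega)
            (by rw [hρl, hcon]; exact ⟨hpl.1, hpl.2⟩)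
        · have : l = t - 2 := by omega
          rw [this] at hcon; exact hB hcon
      set ρ'' : ℕ → ℕ := fun i => if i = k + 1 then s - 2 else ρ i with hρ''def
      have hvk1 : ρ'' (k+1) = s - 2 := by simp [hρ''def]
      have hvother : ∀ i, i ≠ k + 1 → ρ'' i = ρ i := by
        intro i h; simp [hρ''def, h]
      have key := IH (s-1) (by omega) b e ρ'' (k+2) (by omega) (by omega)
          (fun i hi => hpath i (by omega))
          (by
            intro a ha c hc hac
            simp only [Set.mem_Iio] at ha hc
            by_cases h1 : a = k + 1
            · by_cases h2 : c = k + 1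
              · rw [h1, h2]
              · exfalso
                rw [h1, hvk1, hvother c h2] at hac
                exact hs2not c (by omega) hac.symm
            · by_cases h2 : c = k + 1
              · exfalso
                rw [h2, hvk1, hvother a h1] at hac
                exact hs2not a (by omega) hac
              · rw [hvother a h1, hvother c h2] at hac
                exact hinj' a c (by omega) (by omega) hac
          )
          (by rw [hvother 0 (by omega), hρ0])
          (by
            have h1 : k + 2 - 1 = k + 1 := by omega
            rw [h1, hvk1]; omega)
          (by
            intro i hi
            by_cases h1 : i = k + 1
            · rw [h1, hvk1]; omega
            · rw [hvother i h1]
              have h2 := hρlt i (by omega)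
              have h3 : ρ i ≠ s - 1 := fun h => by
                have := hinj' i (t-1) (by omega) (by omega) (by rw [h, hρl]); omega
              omega)
          (by
            intro i hi
            have hik : i ≤ k := by omega
            rcases Nat.lt_or_ge i k with h | h
            · rw [hvother i (by omega), hvother (i+1) (by omega)]
              exact hradj i (by omega)
            · have hieq : i = k := by omega
              rw [hieq, hvother k (by omega), hvk1]
              exact ⟨hkitx2, hkitx1⟩)
          (by
            intro i j hj hij
            by_cases h1 : j = k + 1
            · rw [h1, hvk1, hvother i (by omega)]
              intro hcon
              exact hkmin i (by omega) ⟨hcon.2, hcon.1⟩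
            · rw [hvother i (by omega), hvother j h1]
              exact hrind i j (by omega) hij)
      have hstep : (fills b e (s-1)).card + 1 ≤ (fills b e s).card := by
        apply fills_step1 (fun p => p) (ρ (t-2), s-1)
        · intro p hp
          rw [mem_fills] at hp ⊢
          obtain ⟨⟨hg, h2⟩, h34⟩ := hp
          exact ⟨⟨hg, by omega⟩, h34⟩
        · intro p _ q _ hpq
          exact hpq
        · rw [mem_fills]
          exact ⟨⟨by omega, by omega⟩, hrl.1, hrl.2⟩
        · intro p hp hcon
          rw [mem_fills] at hp
          have h2 : p.2 = s - 1 := congrArg Prod.snd hcon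
          omega
      omega
  · -- v is not on R: contract v
    push_neg at hvR
    have hv1 : 1 ≤ v := by
      rcases Nat.eq_zero_or_pos v with h | h
      · exact absurd (by rw [hρ0, h]) (hvR 0 ht)
      · exact h
    have hvs2 : v + 2 ≤ s := by
      have h := hvR (t-1) (by omega)
      rw [hρl] at h
      omega
    have hpv1 := hpath (v-1) (by omega)
    have hv11 : v - 1 + 1 = v := by omega
    rw [hv11] at hpv1
    have hpv2 := hpath v (by omega)
    have hq1 : b (v-1) ≤ e (v+1) := le_trans hpv1.1 (hvmin' (v+1) (by omega))
    have hq2 : b (v+1) ≤ e (v-1) := le_trans hpv2.2 (hvmin' (v-1) (by omega))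
    set δ : ℕ → ℕ := fun i => if i < v then i else i + 1 with hδdef
    set ρ' : ℕ → ℕ := fun i => if ρ i < v then ρ i else ρ i - 1 with hρ'def
    have hkey : ∀ i, i < t → δ (ρ' i) = ρ i := by
      intro i hi
      have hne := hvR i hi
      by_cases h : ρ i < v
      · simp [hδdef, hρ'def, h]
      · have h2 : ¬ (ρ i - 1 < v) := by omega
        simp only [hρ'def, hδdef, if_neg h, if_neg h2]
        omega
    have key := IH (s-1) (by omega) (fun i => b (δ i)) (fun i => e (δ i)) ρ' t
        (by omega) ht
        (by
          intro i hi
          show b (δ i) ≤ e (δ (i+1)) ∧ b (δ (i+1)) ≤ e (δ i)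
          rcases Nat.lt_or_ge (i+1) v with h | h
          · have hδ1 : δ i = i := by simp only [hδdef]; rw [if_pos (by omega)]
            have hδ2 : δ (i+1) = i+1 := by simp only [hδdef]; rw [if_pos (by omega)]
            rw [hδ1, hδ2]
            exact hpath i (by omega)
          rcases Nat.eq_or_lt_of_le h with heq | hlt
          · have hδ1 : δ i = v - 1 := by
              simp only [hδdef]; rw [if_pos (by omega)]; omega
            have hδ2 : δ (i+1) = v + 1 := by simp only [hδdef]; rw [if_neg (by omega)]; omega
            rw [hδ1, hδ2]
            exact ⟨hq1, hq2⟩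
          · have hδ1 : δ i = i + 1 := by simp only [hδdef]; rw [if_neg (by omega)]
            have hδ2 : δ (i+1) = i + 2 := by simp only [hδdef]; rw [if_neg (by omega)]
            rw [hδ1, hδ2]
            exact hpath (i+1) (by omega))
        (by
          intro a ha c hc hac
          simp only [Set.mem_Iio] at ha hc
          have : ρ a = ρ c := by
            rw [← hkey a ha, ← hkey c hc, hac]
          exact hinj' a c ha hc this)
        (by
          have h0 : ρ 0 < v := by rw [hρ0]; omega
          simp only [hρ'def, if_pos h0, hρ0])
        (by
          have h0 : ¬ (ρ (t-1) < v) := by rw [hρl]; omega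
          simp only [hρ'def, if_neg h0, hρl])
        (by
          intro i hi
          have h1 := hρlt i hi
          have h2 := hvR i hi
          by_cases h : ρ i < v
          · simp only [hρ'def, if_pos h]; omega
          · simp only [hρ'def, if_neg h]; omega)
        (by
          intro i hi
          show b (δ (ρ' i)) ≤ e (δ (ρ' (i+1))) ∧ b (δ (ρ' (i+1))) ≤ e (δ (ρ' i))
          rw [hkey i (by omega), hkey (i+1) (by omega)]
          exact hradj i hi)
        (by
          intro i j hj hij
          show ¬(b (δ (ρ' i)) ≤ e (δ (ρ' j)) ∧ b (δ (ρ' j)) ≤ e (δ (ρ' i)))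
          rw [hkey i (by omega), hkey j (by omega)]
          exact hrind i j hj hij)
    have hstep : (fills (fun i => b (δ i)) (fun i => e (δ i)) (s-1)).card + 1
        ≤ (fills b e s).card := by
      apply fills_step1 (fun p => (δ p.1, δ p.2)) (v-1, v+1)
      · intro p hp
        rw [mem_fills] at hp ⊢
        obtain ⟨⟨hg, h2⟩, h3, h4⟩ := hp
        refine ⟨⟨?_, ?_⟩, h3, h4⟩
        · simp only [hδdef]; split_ifs <;> omega
        · simp only [hδdef]; split_ifs <;> omega
      · intro p hp q hq hpq
        have h1 : δ p.1 = δ q.1 := congrArg Prod.fst hpq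
        have h2 : δ p.2 = δ q.2 := congrArg Prod.snd hpq
        have hδinj : ∀ a c, δ a = δ c → a = c := by
          intro a c h
          simp only [hδdef] at h
          split_ifs at h <;> omega
        exact Prod.ext (hδinj _ _ h1) (hδinj _ _ h2)
      · rw [mem_fills]
        exact ⟨⟨by omega, by omega⟩, hq1, hq2⟩
      · intro p hp hcon
        rw [mem_fills] at hp
        obtain ⟨⟨hg, h2⟩, _⟩ := hp
        have h1' : δ p.1 = v - 1 := congrArg Prod.fst hcon
        have h2' : δ p.2 = v + 1 := congrArg Prod.snd hcon
        simp only [hδdef] at h1' h2'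
        split_ifs at h1' h2' <;> omega
    omega

theorem statement_16 {V : Type*} [Fintype V] [DecidableEq V]
    (G F : SimpleGraph V) [DecidableRel F.Adj]
    (hdisj : ∀ u v, F.Adj u v → ¬ G.Adj u v)
    (hint : Nonempty (IntervalModel (G ⊔ F)))
    (s t : ℕ) (hs : 0 < s) (ht : 0 < t) (x y : ℕ → V)
    (hxinj : Set.InjOn x (Set.Iio s)) (hyinj : Set.InjOn y (Set.Iio t))
    (hxadj : ∀ i, i + 1 < s → G.Adj (x i) (x (i + 1)))
    (hxind : ∀ i j, j < s → i + 1 < j → ¬ G.Adj (x i) (x j))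
    (hyadj : ∀ i, i + 1 < t → (G ⊔ F).Adj (y i) (y (i + 1)))
    (hyind : ∀ i j, j < t → i + 1 < j → ¬ (G ⊔ F).Adj (y i) (y j))
    (hy0 : y 0 = x 0) (hyt : y (t - 1) = x (s - 1))
    (hsub : ∀ i < t, ∃ j < s, y i = x j) :
    s - t ≤ F.edgeFinset.card := by
  classical
  obtain ⟨M⟩ := hint
  set b : ℕ → ℕ := fun j => M.σ (Sum.inl (x j)) with hbdef
  set e : ℕ → ℕ := fun j => M.σ (Sum.inr (x j)) with hedef
  have hadj : ∀ c d, c < s → d < s → c ≠ d →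
      ((G ⊔ F).Adj (x c) (x d) ↔ (b c ≤ e d ∧ b d ≤ e c)) := by
    intro c d hc hd hcd
    have hx : x c ≠ x d := fun h => hcd (hxinj (Set.mem_Iio.mpr hc) (Set.mem_Iio.mpr hd) h)
    have hiff := M.adjIff (x c) (x d) hx
    constructor
    · intro hA
      by_contra hcon
      rw [not_and_or, not_le, not_le] at hcon
      exact (hiff.mpr (by rcases hcon with h | h; exacts [Or.inl h, Or.inr h])) hA
    · intro hitx
      by_contra hA
      rcases hiff.mp hA with h | h
      · exact absurd hitx.1 (not_le.mpr h)
      · exact absurd hitx.2 (not_le.mpr h)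
  have hsub' : ∀ i, ∃ j, i < t → (j < s ∧ y i = x j) := by
    intro i
    by_cases h : i < t
    · obtain ⟨j, hj1, hj2⟩ := hsub i h
      exact ⟨j, fun _ => ⟨hj1, hj2⟩⟩
    · exact ⟨0, fun h' => absurd h' h⟩
  choose ρ hρ using hsub'
  have hρlt : ∀ i, i < t → ρ i < s := fun i hi => (hρ i hi).1
  have hyx : ∀ i, i < t → y i = x (ρ i) := fun i hi => (hρ i hi).2
  have hρ0 : ρ 0 = 0 := by
    have h1 : x (ρ 0) = x 0 := by rw [← hyx 0 ht, hy0]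
    exact hxinj (Set.mem_Iio.mpr (hρlt 0 ht)) (Set.mem_Iio.mpr hs) h1
  have hρl : ρ (t-1) = s-1 := by
    have h1 : x (ρ (t-1)) = x (s-1) := by rw [← hyx (t-1) (by omega), hyt]
    exact hxinj (Set.mem_Iio.mpr (hρlt (t-1) (by omega))) (Set.mem_Iio.mpr (by omega)) h1
  have hρinj : Set.InjOn ρ (Set.Iio t) := by
    intro a ha c hc hac
    simp only [Set.mem_Iio] at ha hc
    have : y a = y c := by rw [hyx a ha, hyx c hc, hac]
    exact hyinj (Set.mem_Iio.mpr ha) (Set.mem_Iio.mpr hc) this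
  have habs := abstract_fill s b e ρ t hs ht
      (by
        intro i hi
        exact (hadj i (i+1) (by omega) hi (by omega)).mp
          ((SimpleGraph.sup_adj G F _ _).mpr (Or.inl (hxadj i hi))))
      hρinj hρ0 hρl hρlt
      (by
        intro i hi
        have hA := hyadj i hi
        rw [hyx i (by omega), hyx (i+1) (by omega)] at hA
        have hne : ρ i ≠ ρ (i+1) := fun h => by
          have := hρinj (Set.mem_Iio.mpr (by omega : i < t)) (Set.mem_Iio.mpr hi) h
          omega
        exact (hadj (ρ i) (ρ (i+1)) (hρlt i (by omega)) (hρlt (i+1) hi) hne).mp hA)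
      (by
        intro i j hj hij hcon
        have hne : ρ i ≠ ρ j := fun h => by
          have := hρinj (Set.mem_Iio.mpr (by omega : i < t)) (Set.mem_Iio.mpr hj) h
          omega
        have hA := (hadj (ρ i) (ρ j) (hρlt i (by omega)) (hρlt j hj) hne).mpr hcon
        rw [← hyx i (by omega), ← hyx j hj] at hA
        exact hyind i j hj hij hA)
  have hcard : (fills b e s).card ≤ F.edgeFinset.card := by
    refine Finset.card_le_card_of_injOn (s := fills b e s) (t := F.edgeFinset) (fun p : ℕ × ℕ => s(x p.1, x p.2)) ?_ ?_
    · intro p hp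
      rw [Finset.mem_coe, mem_fills] at hp
      obtain ⟨⟨hg, h2⟩, hitx⟩ := hp
      have h1 : p.1 < s := by omega
      have hne : p.1 ≠ p.2 := by omega
      have hA : (G ⊔ F).Adj (x p.1) (x p.2) := (hadj p.1 p.2 h1 h2 hne).mpr hitx
      rw [SimpleGraph.sup_adj G F] at hA
      rw [Finset.mem_coe, SimpleGraph.mem_edgeFinset, SimpleGraph.mem_edgeSet]
      rcases hA with hG | hF
      · exact absurd hG (hxind p.1 p.2 h2 (by omega))
      · exact hF
    · intro p hp q hq hpq
      rw [Finset.mem_coe, mem_fills] at hp hq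
      obtain ⟨⟨hg1, h21⟩, _⟩ := hp
      obtain ⟨⟨hg2, h22⟩, _⟩ := hq
      rw [Sym2.eq_iff] at hpq
      rcases hpq with ⟨ha, hb⟩ | ⟨ha, hb⟩
      · have e1 : p.1 = q.1 :=
          hxinj (Set.mem_Iio.mpr (by omega)) (Set.mem_Iio.mpr (by omega)) ha
        have e2 : p.2 = q.2 :=
          hxinj (Set.mem_Iio.mpr (by omega)) (Set.mem_Iio.mpr (by omega)) hb
        exact Prod.ext e1 e2
      · have e1 : p.1 = q.2 :=
          hxinj (Set.mem_Iio.mpr (by omega)) (Set.mem_Iio.mpr (by omega)) ha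
        have e2 : p.2 = q.1 :=
          hxinj (Set.mem_Iio.mpr (by omega)) (Set.mem_Iio.mpr (by omega)) hb
        exfalso
        omega
  omega
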